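/- arXiv:2511.03804 — 2 statements merged into one kernel-verified Lean document; each statement's English description precedes it below -/
import Mathlib

section
/- Let R be a commutative ring, let m be a natural number, let d : Fin m → R, and let N be an m×m matrix over R. Let D = diagonal(d) be the diagonal matrix with entries d. Then det(D + N) = Σ over all subsets S of Fin m of (Π_{i ∈ S} d i) · det(N_{Sᶜ}), where N_{Sᶜ} denotes the principal submatrix of N obtained by deleting the rows and columns with indices in S (and the determinant of the empty matrix is 1). -/
open Matrix Finset

theorem key {R : Type*} [CommRing R] (m : ℕ) (N : Matrix (Fin m) (Fin m) R)
    (S : Finset (Fin m)) :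
    Matrix.det (Matrix.of (S.piecewise (fun i => Pi.single i (1:R)) (fun i => N i))) =
      (N.submatrix (fun i : (Sᶜ : Finset (Fin m)) => (i : Fin m))
        (fun j : (Sᶜ : Finset (Fin m)) => (j : Fin m))).det := by
  classical
  set G : Matrix (Fin m) (Fin m) R :=
    Matrix.of (S.piecewise (fun i => Pi.single i (1:R)) (fun i => N i)) with hG
  let e : {x // x ∈ S} ⊕ {x // ¬ x ∈ S} ≃ Fin m := Equiv.sumCompl (· ∈ S)
  have h1 : (G.submatrix e e).det = G.det := Matrix.det_submatrix_equiv_self e G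
  have h2 : G.submatrix e e =
      Matrix.fromBlocks (1 : Matrix {x // x ∈ S} {x // x ∈ S} R) 0
        (Matrix.of fun (i : {x // ¬ x ∈ S}) (j : {x // x ∈ S}) => N i j)
        (Matrix.of fun (i j : {x // ¬ x ∈ S}) => N i j) := by
    ext i j
    rcases i with i | i <;> rcases j with j | j <;>
      simp only [Matrix.submatrix_apply, e, Equiv.sumCompl_apply_inl,
        Equiv.sumCompl_apply_inr, hG, Matrix.of_apply, Finset.piecewise,
        Matrix.fromBlocks_apply₁₁, Matrix.fromBlocks_apply₁₂,
        Matrix.fromBlocks_apply₂₁, Matrix.fromBlocks_apply₂₂]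
    · rw [if_pos i.2, Pi.single_apply, Matrix.one_apply]
      by_cases h : (i : Fin m) = j
      · simp [h, Subtype.ext_iff]
      · simp [h, Ne.symm h, Subtype.ext_iff]
    · rw [if_pos i.2, Pi.single_apply, if_neg (fun h : (j:Fin m) = i => j.2 (h ▸ i.2)), Matrix.zero_apply]
    · rw [if_neg i.2]
    · rw [if_neg i.2]
  have h3 : G.det = (Matrix.of fun (i j : {x // ¬ x ∈ S}) => N i j).det := by
    rw [← h1, h2, Matrix.det_fromBlocks_zero₁₂, Matrix.det_one, one_mul]
  rw [h3]
  let e' : {x // ¬ x ∈ S} ≃ {x // x ∈ (Sᶜ : Finset (Fin m))} :=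
    Equiv.subtypeEquivRight (fun x => (Finset.mem_compl).symm)
  rw [← Matrix.det_submatrix_equiv_self e'
    (N.submatrix (fun i : (Sᶜ : Finset (Fin m)) => (i : Fin m))
      (fun j : (Sᶜ : Finset (Fin m)) => (j : Fin m)))]
  rfl

/-- Multilinear expansion of the determinant of `diagonal d + N` in its diagonal
part: a sum over subsets `S` of products of diagonal entries times the principal
minor of `N` on the complement of `S`. -/
theorem det_diagonal_add_eq_sum_prod_mul_det {R : Type*} [CommRing R] (m : ℕ)
    (d : Fin m → R) (N : Matrix (Fin m) (Fin m) R) :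
    (Matrix.diagonal d + N).det =
      ∑ S : Finset (Fin m), (∏ i ∈ S, d i) *
        (N.submatrix (fun i : (Sᶜ : Finset (Fin m)) => (i : Fin m))
          (fun j : (Sᶜ : Finset (Fin m)) => (j : Fin m))).det := by
  classical
  have step1 : (Matrix.diagonal d + N).det =
      ∑ S : Finset (Fin m),
        Matrix.det (Matrix.of (S.piecewise (fun i => Matrix.diagonal d i) (fun i => N i))) :=
    Matrix.detRowAlternating.toMultilinearMap.map_add_univ
      (fun i => Matrix.diagonal d i) (fun i => N i)
  rw [step1]
  refine Finset.sum_congr rfl fun S _ => ?_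
  have hdiag : ∀ i, Matrix.diagonal d i = d i • (Pi.single i (1:R) : Fin m → R) := by
    intro i; ext j
    simp only [Pi.smul_apply, Pi.single_apply, Matrix.diagonal_apply, smul_eq_mul, eq_comm]
    split <;> simp
  have hpw : S.piecewise (fun i => Matrix.diagonal d i) (fun i => N i) =
      S.piecewise (fun i => d i • (S.piecewise (fun k => Pi.single k (1:R)) (fun k => N k)) i)
        (S.piecewise (fun k => Pi.single k (1:R)) (fun k => N k)) := by
    ext i j
    by_cases h : i ∈ S <;> simp [Finset.piecewise, h, hdiag]
  have step2 :
      Matrix.det (Matrix.of (S.piecewise (fun i => Matrix.diagonal d i) (fun i => N i))) =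
      (∏ i ∈ S, d i) •
        Matrix.det (Matrix.of (S.piecewise (fun k => Pi.single k (1:R)) (fun k => N k))) := by
    show Matrix.detRowAlternating _ = _
    rw [hpw]
    exact Matrix.detRowAlternating.toMultilinearMap.map_piecewise_smul d
      (S.piecewise (fun k => Pi.single k (1:R)) (fun k => N k)) S
  rw [step2, smul_eq_mul]
  congr 1
  exact key m N S
end

section
/- Let m ≥ 1. Let F : (Fin m → ℝ) → ℂ, r : Fin m → ((Fin m → ℝ) → ℂ), and K : Fin m → Fin m → ((Fin m → ℝ) → ℂ) be functions, each differentiable (in the real sense) everywhere on Fin m → ℝ. For a function G : (Fin m → ℝ) → ℂ and k ∈ Fin m write D_k G for the function t ↦ fderiv ℝ G t (Pi.single k 1) (the partial derivative in the k-th coordinate). Assume that for every t: (i) D_k F t = r k t · F t for every k; (ii) D_k (r j) t = −(K j k t) · (K k j t) for all j ≠ k; (iii) D_k (K i j) t = −(K i k t) · (K k j t) for all pairwise distinct i, j, k. Then for every t, the iterated partial derivative D_0 (D_1 (⋯ (D_{m−1} F) ⋯)) t equals det(M t) · F t, where M t is the m×m complex matrix with entries (M t) j k = r j t if j = k and (M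 t) j k = K j k t if j ≠ k. -/
open Matrix

/-- The partial derivative in the `k`-th coordinate direction of a function
on `Fin m → ℝ`. -/
noncomputable def partialD (m : ℕ) (k : Fin m) (G : (Fin m → ℝ) → ℂ) :
    (Fin m → ℝ) → ℂ :=
  fun t => fderiv ℝ G t (Pi.single k 1)

/-- Bordered determinant expansion in terms of column updates. -/
lemma det_border (n : ℕ) (a : ℂ) (u v : Fin n → ℂ) (C : Matrix (Fin n) (Fin n) ℂ) :
    (Matrix.of (Fin.cons (Fin.cons a u) fun k => Fin.cons (v k) (C k) :
        Fin (n + 1) → Fin (n + 1) → ℂ)).det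
      = a * C.det - ∑ i, u i * (C.updateCol i v).det := by
  set B : Matrix (Fin (n + 1)) (Fin (n + 1)) ℂ :=
    Matrix.of (Fin.cons (Fin.cons a u) fun k => Fin.cons (v k) (C k)) with hB
  have key : ∀ i : Fin n,
      (B.submatrix Fin.succ (Fin.succAbove i.succ)).det
        = (-1 : ℂ) ^ (i : ℕ) * (C.updateCol i v).det := by
    intro i
    have heq : (B.submatrix Fin.succ (Fin.succAbove i.succ)).submatrix id (Fin.cycleRange i)
        = C.updateCol i v := by
      ext k l
      simp only [Matrix.submatrix_apply, id_eq, Fin.succAbove_cycleRange]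
      rcases eq_or_ne l i with rfl | hl
      · rw [Equiv.swap_apply_right]
        simp [hB, Matrix.updateCol_apply]
      · rw [Equiv.swap_apply_of_ne_of_ne (Fin.succ_ne_zero l) ((Fin.succ_injective _).ne hl)]
        simp [hB, Matrix.updateCol_apply, hl]
    have hperm := Matrix.det_permute' (Fin.cycleRange i)
      (B.submatrix Fin.succ (Fin.succAbove i.succ))
    rw [heq, Fin.sign_cycleRange] at hperm
    simp only [Units.val_pow_eq_pow_val, Units.val_neg, Units.val_one, Int.cast_pow,
      Int.cast_neg, Int.cast_one] at hperm
    rw [hperm, ← mul_assoc, ← mul_pow]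
    norm_num
  have h0 : B.submatrix Fin.succ (Fin.succAbove (0 : Fin (n + 1))) = C := by
    ext k l
    simp [hB, Fin.succAbove_zero]
  have hB00 : B 0 0 = a := by simp [hB]
  have hsum : ∀ i : Fin n,
      (-1 : ℂ) ^ ((i.succ : Fin (n+1)) : ℕ) * B 0 i.succ *
          (B.submatrix Fin.succ (Fin.succAbove i.succ)).det
        = -(u i * (C.updateCol i v).det) := by
    intro i
    have hBu : B 0 i.succ = u i := by simp [hB]
    have hsq : (-1 : ℂ) ^ (i : ℕ) * (-1 : ℂ) ^ (i : ℕ) = 1 := by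
      rw [← mul_pow]; norm_num
    rw [key i, hBu, Fin.val_succ, pow_succ]
    calc (-1 : ℂ) ^ (i : ℕ) * -1 * u i * ((-1 : ℂ) ^ (i : ℕ) * (C.updateCol i v).det)
        = ((-1 : ℂ) ^ (i : ℕ) * (-1 : ℂ) ^ (i : ℕ)) *
            (-1 * (u i * (C.updateCol i v).det)) := by ring
      _ = -(u i * (C.updateCol i v).det) := by rw [hsq]; ring
  rw [Matrix.det_succ_row_zero, Fin.sum_univ_succ, h0, hB00]
  simp only [Fin.val_zero, pow_zero, one_mul]
  rw [Finset.sum_congr rfl fun i _ => hsum i, Finset.sum_neg_distrib, ← sub_eq_add_neg]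

/-- Derivative of a determinant whose entries are differentiable functions. -/
lemma hasFDerivAt_det_fun {X : Type*} [NormedAddCommGroup X] [NormedSpace ℝ X] {n : ℕ}
    (f : Fin n → Fin n → X → ℂ) (f' : Fin n → Fin n → X →L[ℝ] ℂ) (t : X)
    (hf : ∀ p q, HasFDerivAt (f p q) (f' p q) t) :
    HasFDerivAt (fun s => (Matrix.of fun p q => f p q s).det)
      (∑ σ : Equiv.Perm (Fin n), (((Equiv.Perm.sign σ : ℤ)) : ℂ) •
        ∑ i, (∏ j ∈ Finset.univ.erase i, f (σ j) j t) • f' (σ i) i) t := by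
  have hfun : (fun s => (Matrix.of fun p q => f p q s).det)
      = fun s => ∑ σ : Equiv.Perm (Fin n), (((Equiv.Perm.sign σ : ℤ)) : ℂ) *
          ∏ i, f (σ i) i s := by
    funext s
    rw [Matrix.det_apply']
    rfl
  rw [hfun]
  apply HasFDerivAt.fun_sum
  intro σ _
  exact (HasFDerivAt.finset_prod (fun i _ => hf (σ i) i)).const_mul _

/-- Evaluation of the derivative of a determinant: sum over column updates. -/
lemma det_deriv_eval {X : Type*} [NormedAddCommGroup X] [NormedSpace ℝ X] {n : ℕ}
    (f : Fin n → Fin n → X → ℂ) (f' : Fin n → Fin n → X →L[ℝ] ℂ) (t : X) (w : X) :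
    (∑ σ : Equiv.Perm (Fin n), (((Equiv.Perm.sign σ : ℤ)) : ℂ) •
        ∑ i, (∏ j ∈ Finset.univ.erase i, f (σ j) j t) • f' (σ i) i) w
      = ∑ i, ((Matrix.of fun p q => f p q t).updateCol i fun p => f' p i w).det := by
  simp only [ContinuousLinearMap.coe_sum', Finset.sum_apply, ContinuousLinearMap.coe_smul',
    Pi.smul_apply, ContinuousLinearMap.smul_apply, smul_eq_mul, Finset.mul_sum]
  rw [Finset.sum_comm]
  refine Finset.sum_congr rfl fun i _ => ?_
  rw [Matrix.det_apply']
  refine Finset.sum_congr rfl fun σ _ => ?_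
  rw [← Finset.mul_prod_erase Finset.univ
    (fun j => ((Matrix.of fun p q => f p q t).updateCol i fun p => f' p i w) (σ j) j)
    (Finset.mem_univ i)]
  have h1 : ((Matrix.of fun p q => f p q t).updateCol i fun p => f' p i w) (σ i) i
      = f' (σ i) i w := by
    simp [Matrix.updateCol_apply]
  have h2 : (∏ j ∈ Finset.univ.erase i,
        ((Matrix.of fun p q => f p q t).updateCol i fun p => f' p i w) (σ j) j)
      = ∏ j ∈ Finset.univ.erase i, f (σ j) j t := by
    refine Finset.prod_congr rfl fun j hj => ?_
    have hji : j ≠ i := Finset.ne_of_mem_erase hj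
    simp [Matrix.updateCol_apply, hji]
  rw [h1, h2]
  ring

def embF (m n : ℕ) (hn : n ≤ m) (i : Fin n) : Fin m :=
  ⟨m - n + i, by have := i.isLt; omega⟩

noncomputable def matN (m : ℕ) (r : Fin m → (Fin m → ℝ) → ℂ)
    (K : Fin m → Fin m → (Fin m → ℝ) → ℂ) (n : ℕ) (hn : n ≤ m) (t : Fin m → ℝ) :
    Matrix (Fin n) (Fin n) ℂ :=
  Matrix.of fun i j =>
    if embF m n hn i = embF m n hn j then r (embF m n hn i) t
    else K (embF m n hn i) (embF m n hn j) t

lemma step_lemma (m : ℕ)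
    (F : (Fin m → ℝ) → ℂ)
    (r : Fin m → (Fin m → ℝ) → ℂ)
    (K : Fin m → Fin m → (Fin m → ℝ) → ℂ)
    (hF : Differentiable ℝ F)
    (hr : ∀ k, Differentiable ℝ (r k))
    (hK : ∀ i j, Differentiable ℝ (K i j))
    (h1 : ∀ t (k : Fin m), partialD m k F t = r k t * F t)
    (h2 : ∀ t (j k : Fin m), j ≠ k →
      partialD m k (r j) t = -(K j k t * K k j t))
    (h3 : ∀ t (i j k : Fin m), i ≠ j → j ≠ k → i ≠ k →
      partialD m k (K i j) t = -(K i k t * K k j t))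
    (n : ℕ) (hn1 : n + 1 ≤ m) (s : Fin m → ℝ) :
    partialD m (embF m (n+1) hn1 0)
        (fun u => (matN m r K n (Nat.le_of_succ_le hn1) u).det * F u) s
      = (matN m r K (n+1) hn1 s).det * F s := by
  have hn : n ≤ m := Nat.le_of_succ_le hn1
  set l : Fin m := embF m (n+1) hn1 0 with hl
  have hlval : (l : ℕ) = m - (n + 1) := by simp [hl, embF]
  have hne : ∀ p : Fin n, embF m n hn p ≠ l := by
    intro p h
    have h' := congrArg Fin.val h
    have := p.isLt
    simp [embF, hlval] at h'
    omega
  set f : Fin n → Fin n → (Fin m → ℝ) → ℂ := fun p q u =>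
    if embF m n hn p = embF m n hn q then r (embF m n hn p) u
    else K (embF m n hn p) (embF m n hn q) u with hf_def
  have hfd : ∀ p q, Differentiable ℝ (f p q) := by
    intro p q
    rw [hf_def]
    by_cases h : embF m n hn p = embF m n hn q <;> simp only [h, if_true, if_false] <;>
      first
        | exact hr _
        | exact hK _ _
  have hf' : ∀ p q, HasFDerivAt (f p q) (fderiv ℝ (f p q) s) s := fun p q =>
    (hfd p q).differentiableAt.hasFDerivAt
  have hdet : HasFDerivAt (fun u => (matN m r K n hn u).det)
      (∑ σ : Equiv.Perm (Fin n), (((Equiv.Perm.sign σ : ℤ)) : ℂ) •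
        ∑ i, (∏ j ∈ Finset.univ.erase i, f (σ j) j s) •
          fderiv ℝ (f (σ i) i) s) s :=
    hasFDerivAt_det_fun f (fun p q => fderiv ℝ (f p q) s) s hf'
  have hcol : ∀ p q : Fin n, fderiv ℝ (f p q) s (Pi.single l 1)
      = -(K (embF m n hn p) l s * K l (embF m n hn q) s) := by
    intro p q
    have hpd : fderiv ℝ (f p q) s (Pi.single l 1) = partialD m l (f p q) s := rfl
    rw [hpd]
    by_cases h : embF m n hn p = embF m n hn q
    · have hfr : f p q = r (embF m n hn p) := by
        funext u; rw [hf_def]; simp [h]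
      rw [hfr, h2 s _ l (hne p), ← h]
    · have hfk : f p q = K (embF m n hn p) (embF m n hn q) := by
        funext u; rw [hf_def]; simp [h]
      rw [hfk, h3 s _ _ l h (hne q) (hne p)]
  have hgd : DifferentiableAt ℝ (fun u => (matN m r K n hn u).det) s :=
    hdet.differentiableAt
  have hmul := fderiv_fun_mul hgd (hF s)
  have hLHS : partialD m l (fun u => (matN m r K n hn u).det * F u) s
      = (matN m r K n hn s).det * (r l s * F s)
        + F s * (∑ i, ((Matrix.of fun p q => f p q s).updateCol i
            fun p => fderiv ℝ (f p i) s (Pi.single l 1)).det) := by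
    have hpd : partialD m l (fun u => (matN m r K n hn u).det * F u) s
        = fderiv ℝ (fun u => (matN m r K n hn u).det * F u) s (Pi.single l 1) := rfl
    rw [hpd, hmul]
    simp only [ContinuousLinearMap.add_apply, ContinuousLinearMap.smul_apply, smul_eq_mul]
    have hFder : fderiv ℝ F s (Pi.single l 1) = r l s * F s := h1 s l
    have hgder : fderiv ℝ (fun u => (matN m r K n hn u).det) s (Pi.single l 1)
        = ∑ i, ((Matrix.of fun p q => f p q s).updateCol i
            fun p => fderiv ℝ (f p i) s (Pi.single l 1)).det := by
      rw [hdet.fderiv]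
      exact det_deriv_eval f (fun p q => fderiv ℝ (f p q) s) s (Pi.single l 1)
    rw [hFder, hgder]
  rw [hLHS]
  have hupd : ∀ i : Fin n, ((Matrix.of fun p q => f p q s).updateCol i
        fun p => fderiv ℝ (f p i) s (Pi.single l 1)).det
      = -(K l (embF m n hn i) s) *
        ((matN m r K n hn s).updateCol i fun p => K (embF m n hn p) l s).det := by
    intro i
    have hcoleq : (fun p => fderiv ℝ (f p i) s (Pi.single l 1))
        = (-(K l (embF m n hn i) s)) • (fun p => K (embF m n hn p) l s) := by
      funext p
      rw [hcol p i]
      simp only [Pi.smul_apply, smul_eq_mul]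
      ring
    have hMeq : (Matrix.of fun p q => f p q s) = matN m r K n hn s := rfl
    rw [hcoleq, hMeq, Matrix.det_updateCol_smul]
  rw [Finset.sum_congr rfl fun i _ => hupd i]
  have hsucc : ∀ q : Fin n, embF m (n+1) hn1 q.succ = embF m n hn q := by
    intro q
    ext
    simp only [embF, Fin.val_succ]
    omega
  have hBmat : matN m r K (n+1) hn1 s
      = Matrix.of (Fin.cons (Fin.cons (r l s) fun q => K l (embF m n hn q) s)
          (fun p => Fin.cons (K (embF m n hn p) l s) (matN m r K n hn s p)) :
          Fin (n + 1) → Fin (n + 1) → ℂ) := by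
    ext p q
    refine Fin.cases ?_ (fun p => ?_) p <;> refine Fin.cases ?_ (fun q => ?_) q
    · simp [matN, ← hl]
    · simp only [Matrix.of_apply, Fin.cons_zero, Fin.cons_succ, matN, hsucc, ← hl]
      rw [if_neg (fun h => hne q h.symm)]
    · simp only [Matrix.of_apply, Fin.cons_zero, Fin.cons_succ, matN, hsucc, ← hl]
      rw [if_neg (hne p)]
    · simp only [Matrix.of_apply, Fin.cons_succ, matN, hsucc]
  rw [hBmat, det_border]
  simp only [neg_mul, Finset.sum_neg_distrib]
  ring

/-- Abstract fermionization identity: if `F`, `r j`, `K i j` are differentiable,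
`∂_k F = r k · F`, `∂_k r j = −K j k · K k j` for `j ≠ k` and
`∂_k K i j = −K i k · K k j` for pairwise distinct `i, j, k`, then the iterated
partial derivative `∂_0 ∂_1 ⋯ ∂_{m−1} F` equals `det M · F`, where `M` has
diagonal entries `r j` and off-diagonal entries `K j k`. -/
theorem iterated_partial_eq_det_mul
    (m : ℕ) (hm : 1 ≤ m)
    (F : (Fin m → ℝ) → ℂ)
    (r : Fin m → (Fin m → ℝ) → ℂ)
    (K : Fin m → Fin m → (Fin m → ℝ) → ℂ)
    (hF : Differentiable ℝ F)
    (hr : ∀ k, Differentiable ℝ (r k))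
    (hK : ∀ i j, Differentiable ℝ (K i j))
    (h1 : ∀ t (k : Fin m), partialD m k F t = r k t * F t)
    (h2 : ∀ t (j k : Fin m), j ≠ k →
      partialD m k (r j) t = -(K j k t * K k j t))
    (h3 : ∀ t (i j k : Fin m), i ≠ j → j ≠ k → i ≠ k →
      partialD m k (K i j) t = -(K i k t * K k j t)) :
    ∀ t, (List.finRange m).foldr (partialD m) F t =
      (Matrix.of fun j k : Fin m => if j = k then r j t else K j k t).det * F t := by
  have main : ∀ n (hn : n ≤ m),
      ((List.finRange m).drop (m - n)).foldr (partialD m) F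
        = fun s => (matN m r K n hn s).det * F s := by
    intro n
    induction n with
    | zero =>
      intro hn
      rw [Nat.sub_zero, List.drop_eq_nil_of_le (by simp)]
      funext s
      simp [matN, Matrix.det_fin_zero]
    | succ n ih =>
      intro hn1
      have hn : n ≤ m := Nat.le_of_succ_le hn1
      have hdrop : (List.finRange m).drop (m - (n+1))
          = embF m (n+1) hn1 0 :: (List.finRange m).drop (m - n) := by
        have hlt : m - (n+1) < (List.finRange m).length := by
          rw [List.length_finRange]; omega
        rw [List.drop_eq_getElem_cons hlt]
        congr 1
        · rw [List.getElem_finRange]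
          ext
          simp [embF]
        · congr 1
          omega
      rw [hdrop, List.foldr_cons, ih hn]
      funext s
      exact step_lemma m F r K hF hr hK h1 h2 h3 n hn1 s
  intro t
  have hmain := main m (le_refl m)
  rw [Nat.sub_self, List.drop_zero] at hmain
  have hemb : ∀ i : Fin m, embF m m (le_refl m) i = i := by
    intro i
    ext
    simp [embF]
  have hM : (Matrix.of fun j k : Fin m => if j = k then r j t else K j k t)
      = matN m r K m (le_refl m) t := by
    ext p q
    simp only [matN, Matrix.of_apply, hemb]
  rw [hmain, hM]
end
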